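/- arXiv:1808.09875 — 3 statements merged into one kernel-verified Lean document; each statement's English description precedes it below -/
import Mathlib

section
/- Generalization over witness variables: Suppose CS is a variant-closed constant specification and CS(V) its extension. If ⊢_{CS(V)} φ(a) where a is a witness variable, then for some basic variable y not occurring in the proof, ⊢_{CS(V)} ∀y φ(y). -/
/-- Justification terms of first-order justification logic (FOLPb / FOJT45). -/
inductive JTerm : Type
  | jvar : Nat → JTerm
  | jconst : Nat → JTerm
  | app : JTerm → JTerm → JTerm
  | plus : JTerm → JTerm → JTerm
  | bang : JTerm → JTerm
  | bb : JTerm → JTerm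
  | gen : Nat → JTerm → JTerm
  | quest : JTerm → JTerm
  deriving DecidableEq

namespace JTerm

/-- Basic variables occurring as `gen` subscripts in a term. -/
def gvars : JTerm → Finset Nat
  | jvar _ => ∅
  | jconst _ => ∅
  | app t s => t.gvars ∪ s.gvars
  | plus t s => t.gvars ∪ s.gvars
  | bang t => t.gvars
  | bb t => t.gvars
  | gen x t => insert x t.gvars
  | quest t => t.gvars

end JTerm

/-- Formulas of first-order justification logic.  Individual "variables" are either
basic variables (`Sum.inl n`, which may be quantified and appear as `gen` subscripts)
or extra constants from `V` (witness variables / domain members), which are never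
quantified. -/
inductive Fml (V : Type) : Type
  | atom : Nat → List (Nat ⊕ V) → Fml V
  | bot : Fml V
  | imp : Fml V → Fml V → Fml V
  | all : Nat → Fml V → Fml V
  | box : JTerm → Finset (Nat ⊕ V) → Fml V → Fml V

namespace Fml

variable {V : Type} [DecidableEq V]

def neg (φ : Fml V) : Fml V := φ.imp .bot
def orr (φ ψ : Fml V) : Fml V := φ.neg.imp ψ
def andd (φ ψ : Fml V) : Fml V := (φ.imp ψ.neg).neg
def ex (x : Nat) (φ : Fml V) : Fml V := (Fml.all x φ.neg).neg

/-- Free individual variables.  Following the paper, `fv (t :_X φ) = X`. -/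
def fv : Fml V → Finset (Nat ⊕ V)
  | atom _ l => l.toFinset
  | bot => ∅
  | imp φ ψ => φ.fv ∪ ψ.fv
  | all x φ => φ.fv \ {Sum.inl x}
  | box _ X _ => X

/-- Substitution of `e` for the free occurrences of the individual variable `x`. -/
def subst (x e : Nat ⊕ V) : Fml V → Fml V
  | atom P l => atom P (l.map fun v => if v = x then e else v)
  | bot => bot
  | imp φ ψ => imp (subst x e φ) (subst x e ψ)
  | all y φ => if x = Sum.inl y then all y φ else all y (subst x e φ)
  | box t X φ =>
      if x ∈ X then box t (X.image fun v => if v = x then e else v) (subst x e φ)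
      else box t X φ

/-- `e` is free for `x` in the given formula. -/
def freeFor (e x : Nat ⊕ V) : Fml V → Prop
  | atom _ _ => True
  | bot => True
  | imp φ ψ => freeFor e x φ ∧ freeFor e x ψ
  | all y φ => x ∉ (Fml.all y φ).fv ∨ (e ≠ Sum.inl y ∧ freeFor e x φ)
  | box _ X φ => freeFor e x φ ∧ (e ∈ φ.fv → e ∈ X)

/-- All individual variables occurring in a formula (free, bound, in subscripts,
or as `gen` subscripts of justification terms). -/
def allVars : Fml V → Finset (Nat ⊕ V)
  | atom _ l => l.toFinset
  | bot => ∅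
  | imp φ ψ => φ.allVars ∪ ψ.allVars
  | all x φ => insert (Sum.inl x) φ.allVars
  | box t X φ => X ∪ t.gvars.image Sum.inl ∪ φ.allVars

/-- The set of witness variables / domain constants (`Sum.inr`-variables) occurring
in a formula. -/
def wvars (φ : Fml V) : Finset (Nat ⊕ V) := φ.allVars.filter fun v => v.isRight

/-- Free basic variables. -/
def fbv (φ : Fml V) : Finset Nat :=
  φ.fv.biUnion fun v => match v with | Sum.inl n => {n} | Sum.inr _ => ∅

/-- Universal closure (over the free basic variables). -/
noncomputable def close (φ : Fml V) : Fml V := φ.fbv.toList.foldr Fml.all φ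

/-- Renaming of the free individual variables of a formula. -/
def renameFree (ρ : (Nat ⊕ V) → (Nat ⊕ V)) : Fml V → Fml V
  | atom P l => atom P (l.map ρ)
  | bot => bot
  | imp φ ψ => imp (renameFree ρ φ) (renameFree ρ ψ)
  | all y φ => all y (renameFree (Function.update ρ (Sum.inl y) (Sum.inl y)) φ)
  | box t X φ => box t (X.image ρ) (renameFree (fun v => if v ∈ X then ρ v else v) φ)

/-- Replacement of *every* occurrence of the individual variable `a` by `e`
(used for witness variables, which are never bound). -/
def replaceAll (a e : Nat ⊕ V) : Fml V → Fml V
  | atom P l => atom P (l.map fun v => if v = a then e else v)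
  | bot => bot
  | imp φ ψ => imp (replaceAll a e φ) (replaceAll a e ψ)
  | all x φ => all x (replaceAll a e φ)
  | box t X φ => box t (X.image fun v => if v = a then e else v) (replaceAll a e φ)

/-- Change the type of extra constants. -/
def vmap {V' : Type} [DecidableEq V'] (f : V → V') : Fml V → Fml V'
  | atom P l => atom P (l.map (Sum.map id f))
  | bot => bot
  | imp φ ψ => imp (vmap f φ) (vmap f ψ)
  | all x φ => all x (vmap f φ)
  | box t X φ => box t (X.image (Sum.map id f)) (vmap f φ)

def size : Fml V → Nat
  | atom _ _ => 1
  | bot => 1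
  | imp φ ψ => φ.size + ψ.size + 1
  | all _ φ => φ.size + 1
  | box _ _ φ => φ.size + 1

/-- Simultaneous substitution of all free basic variables. -/
def instAll (σ : Nat → Nat ⊕ V) : Fml V → Fml V
  | atom P l => atom P (l.map fun v => match v with | Sum.inl n => σ n | w => w)
  | bot => bot
  | imp φ ψ => imp (instAll σ φ) (instAll σ ψ)
  | all x φ => all x (instAll (Function.update σ x (Sum.inl x)) φ)
  | box t X φ =>
      box t (X.image fun v => match v with | Sum.inl n => σ n | w => w)
        (instAll (fun n => if Sum.inl n ∈ X then σ n else Sum.inl n) φ)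

theorem size_subst (x e : Nat ⊕ V) : ∀ φ : Fml V, (φ.subst x e).size = φ.size := by
  intro φ
  induction φ with
  | atom P l => simp [subst, size]
  | bot => simp [subst, size]
  | imp φ ψ ihφ ihψ => simp [subst, size, ihφ, ihψ]
  | all y φ ih => by_cases h : x = Sum.inl y <;> simp [subst, size, h, ih]
  | box t X φ ih => by_cases h : x ∈ X <;> simp [subst, size, h, ih]

theorem size_instAll : ∀ (φ : Fml V) (σ : Nat → Nat ⊕ V), (φ.instAll σ).size = φ.size := by
  intro φ
  induction φ with
  | atom P l => intro σ; simp [instAll, size]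
  | bot => intro σ; simp [instAll, size]
  | imp φ ψ ihφ ihψ => intro σ; simp [instAll, size, ihφ, ihψ]
  | all y φ ih => intro σ; simp [instAll, size, ih]
  | box t X φ ih => intro σ; simp [instAll, size, ih]

end Fml

/-- The two logics considered in the paper. -/
inductive Logic : Type
  | folpb
  | fojt45

/-- Axioms of the systems: **A1** (a standard Hilbert axiomatization of classical
first-order logic), **A2**, **A3**, **B1**–**B5**, together with the Barcan axiom
**Bb** (for FOLPb only) and negative introspection **B6** (for FOJT45 only). -/
inductive IsAxiom {V : Type} [DecidableEq V] : Logic → Fml V → Prop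
  | a1k (L) (φ ψ : Fml V) : IsAxiom L (φ.imp (ψ.imp φ))
  | a1s (L) (φ ψ χ : Fml V) :
      IsAxiom L ((φ.imp (ψ.imp χ)).imp ((φ.imp ψ).imp (φ.imp χ)))
  | a1dne (L) (φ : Fml V) : IsAxiom L (φ.neg.neg.imp φ)
  | a1inst (L) (x : Nat) (e : Nat ⊕ V) (φ : Fml V) (h : φ.freeFor e (Sum.inl x)) :
      IsAxiom L ((Fml.all x φ).imp (φ.subst (Sum.inl x) e))
  | a1allImp (L) (x : Nat) (φ ψ : Fml V) :
      IsAxiom L ((Fml.all x (φ.imp ψ)).imp ((Fml.all x φ).imp (Fml.all x ψ)))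
  | a1vac (L) (x : Nat) (φ : Fml V) (h : Sum.inl x ∉ φ.fv) :
      IsAxiom L (φ.imp (Fml.all x φ))
  | a2 (L) (t : JTerm) (X : Finset (Nat ⊕ V)) (y : Nat ⊕ V) (φ : Fml V)
      (h : y ∉ φ.fv) :
      IsAxiom L ((Fml.box t (insert y X) φ).imp (Fml.box t X φ))
  | a3 (L) (t : JTerm) (X : Finset (Nat ⊕ V)) (y : Nat ⊕ V) (φ : Fml V) :
      IsAxiom L ((Fml.box t X φ).imp (Fml.box t (insert y X) φ))
  | b1 (L) (t : JTerm) (X : Finset (Nat ⊕ V)) (φ : Fml V) :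
      IsAxiom L ((Fml.box t X φ).imp φ)
  | b2 (L) (t s : JTerm) (X : Finset (Nat ⊕ V)) (φ ψ : Fml V) :
      IsAxiom L ((Fml.box t X (φ.imp ψ)).imp
        ((Fml.box s X φ).imp (Fml.box (t.app s) X ψ)))
  | b3l (L) (t s : JTerm) (X : Finset (Nat ⊕ V)) (φ : Fml V) :
      IsAxiom L ((Fml.box t X φ).imp (Fml.box (t.plus s) X φ))
  | b3r (L) (t s : JTerm) (X : Finset (Nat ⊕ V)) (φ : Fml V) :
      IsAxiom L ((Fml.box s X φ).imp (Fml.box (t.plus s) X φ))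
  | b4 (L) (t : JTerm) (X : Finset (Nat ⊕ V)) (φ : Fml V) :
      IsAxiom L ((Fml.box t X φ).imp (Fml.box t.bang X (Fml.box t X φ)))
  | b5 (L) (t : JTerm) (X : Finset (Nat ⊕ V)) (x : Nat) (φ : Fml V)
      (h : Sum.inl x ∉ X) :
      IsAxiom L ((Fml.box t X φ).imp (Fml.box (t.gen x) X (Fml.all x φ)))
  | bb (t : JTerm) (X : Finset (Nat ⊕ V)) (y : Nat) (φ : Fml V)
      (h : Sum.inl y ∉ X) :
      IsAxiom Logic.folpb
        ((Fml.all y (Fml.box t (insert (Sum.inl y) X) φ)).imp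
          (Fml.box t.bb X (Fml.all y φ)))
  | b6 (t : JTerm) (X : Finset (Nat ⊕ V)) (φ : Fml V) :
      IsAxiom Logic.fojt45
        ((Fml.box t X φ).neg.imp (Fml.box t.quest X (Fml.box t X φ).neg))

/-- Derivability from a set `Γ` of assumptions, with extra axioms from the constant
specification `CS`; generalization is only applied to variables not free in `Γ`. -/
inductive Deriv {V : Type} [DecidableEq V] (L : Logic) (CS : Set (Fml V))
    (Γ : Set (Fml V)) : Fml V → Prop
  | ax {φ : Fml V} : IsAxiom L φ → Deriv L CS Γ φ
  | cs {φ : Fml V} : φ ∈ CS → Deriv L CS Γ φ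
  | hyp {φ : Fml V} : φ ∈ Γ → Deriv L CS Γ φ
  | mp {φ ψ : Fml V} : Deriv L CS Γ (φ.imp ψ) → Deriv L CS Γ φ → Deriv L CS Γ ψ
  | genR {φ : Fml V} {x : Nat} : Deriv L CS Γ φ →
      (∀ ψ ∈ Γ, Sum.inl x ∉ ψ.fv) → Deriv L CS Γ (Fml.all x φ)

/-- `CS` is a constant specification: each member has the form `c : ψ` with `ψ` an axiom. -/
def IsCS {V : Type} [DecidableEq V] (L : Logic) (CS : Set (Fml V)) : Prop :=
  ∀ χ ∈ CS, ∃ (c : Nat) (φ : Fml V),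
    χ = Fml.box (JTerm.jconst c) ∅ φ ∧ IsAxiom L φ

/-- `CS` is axiomatically appropriate. -/
def AxAppropriate {V : Type} [DecidableEq V] (L : Logic) (CS : Set (Fml V)) : Prop :=
  ∀ φ : Fml V, IsAxiom L φ → ∃ c : Nat, Fml.box (JTerm.jconst c) ∅ φ ∈ CS

def Consistent {V : Type} [DecidableEq V] (L : Logic) (CS Γ : Set (Fml V)) : Prop :=
  ¬ Deriv L CS Γ Fml.bot

def MaxConsistent {V : Type} [DecidableEq V] (L : Logic) (CS Γ : Set (Fml V)) : Prop :=
  Consistent L CS Γ ∧ ∀ Δ : Set (Fml V), Γ ⊆ Δ → Consistent L CS Δ → Δ = Γ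

/-- Formulas of the basic language (no witness variables). -/
abbrev FmlB := Fml Empty

/-- Henkin formulas: formulas possibly containing witness variables (`Sum.inr`). -/
abbrev FmlW := Fml Nat

/-- A basic-language formula regarded as a Henkin formula. -/
def liftB : FmlB → FmlW := Fml.vmap fun e => e.elim

/-- A Henkin formula containing no witness variables. -/
def NoWitness (φ : FmlW) : Prop := ∀ v ∈ φ.allVars, v.isLeft = true

/-- Two formulas are variable variants: one is obtained from the other by a
bijective renaming of free individual variables. -/
def VarVariant {V : Type} [DecidableEq V] (φ ψ : Fml V) : Prop :=
  ∃ ρ : (Nat ⊕ V) → (Nat ⊕ V), Function.Bijective ρ ∧ ψ = Fml.renameFree ρ φ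

/-- A constant specification is variant closed. -/
def VariantClosed {V : Type} [DecidableEq V] (CS : Set (Fml V)) : Prop :=
  ∀ (φ ψ : Fml V) (c : Nat), VarVariant φ ψ →
    (Fml.box (JTerm.jconst c) ∅ φ ∈ CS ↔ Fml.box (JTerm.jconst c) ∅ ψ ∈ CS)

/-- The extension `CS(V)` of a basic constant specification to the language with
witness variables: justified axioms with some free basic variables replaced by
distinct witness variables. -/
def CSV (CS : Set FmlB) : Set FmlW :=
  {χ | ∃ (c : Nat) (φ : FmlB) (ρ : (Nat ⊕ Nat) → (Nat ⊕ Nat)),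
    Fml.box (JTerm.jconst c) ∅ φ ∈ CS ∧
    Function.Injective ρ ∧
    (∀ m : Nat, ρ (Sum.inr m) = Sum.inr m) ∧
    (∀ n : Nat, ρ (Sum.inl n) = Sum.inl n ∨ ∃ m : Nat, ρ (Sum.inl n) = Sum.inr m) ∧
    χ = Fml.box (JTerm.jconst c) ∅ (Fml.renameFree ρ (liftB φ))}

/-- `Γ^#`. -/
def sharp (Γ : Set FmlW) : Set FmlW :=
  {χ | ∃ (t : JTerm) (X : Finset (Nat ⊕ Nat)) (φ : FmlW),
    Fml.box t X φ ∈ Γ ∧ (Fml.box t X φ : FmlW).fbv = ∅ ∧ X = φ.wvars ∧ χ = φ.close}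

/-! ### Templates -/

inductive Tmpl : Type
  | pvar : Nat → Tmpl
  | neg : Tmpl → Tmpl
  | orr : Tmpl → Tmpl → Tmpl
  | andd : Tmpl → Tmpl → Tmpl
  | box : Tmpl → Tmpl

namespace Tmpl

def letters : Tmpl → Multiset Nat
  | pvar i => {i}
  | neg G => G.letters
  | orr G H => G.letters + H.letters
  | andd G H => G.letters + H.letters
  | box G => G.letters

/-- No propositional letter occurs more than once. -/
def IsTemplate (F : Tmpl) : Prop := F.letters.Nodup

def Positive : Tmpl → Prop
  | pvar _ => True
  | neg _ => False
  | orr G H => G.Positive ∧ H.Positive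
  | andd G H => G.Positive ∧ H.Positive
  | box G => G.Positive

def Disjunctive : Tmpl → Prop
  | pvar _ => True
  | neg _ => False
  | orr G H => G.Disjunctive ∧ H.Disjunctive
  | andd _ _ => False
  | box G => G.Disjunctive

end Tmpl

/-- The instantiation set `⟦F(φ⃗)⟧`, where the valuation `v` gives the Henkin formula
substituted for each propositional letter. -/
inductive Inst (v : Nat → FmlW) : Tmpl → FmlW → Prop
  | pvar (i : Nat) : Inst v (Tmpl.pvar i) (v i)
  | neg {G : Tmpl} {ψ : FmlW} : Inst v G ψ → Inst v (Tmpl.neg G) ψ.neg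
  | orr {G H : Tmpl} {ψ θ : FmlW} :
      Inst v G ψ → Inst v H θ → Inst v (Tmpl.orr G H) (ψ.orr θ)
  | andd {G H : Tmpl} {ψ θ : FmlW} :
      Inst v G ψ → Inst v H θ → Inst v (Tmpl.andd G H) (ψ.andd θ)
  | box {G : Tmpl} {ψ : FmlW} (t : JTerm) :
      Inst v G ψ → Inst v (Tmpl.box G) (Fml.box t ψ.wvars ψ)

/-- The set of negations of members of `⟦F(φ⃗)⟧`. -/
def NegInst (v : Nat → FmlW) (F : Tmpl) : Set FmlW :=
  {χ | ∃ ψ : FmlW, Inst v F ψ ∧ χ = ψ.neg}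

/-- `Δ` admits instantiation (relative to the basic constant specification `CS`). -/
def AdmitsInst (CS : Set FmlB) (Δ : Set FmlW) : Prop :=
  ∀ F : Tmpl, F.IsTemplate → F.Disjunctive →
    ∀ (v : Nat → FmlW) (q x : Nat) (φ : FmlW),
      Consistent Logic.folpb (CSV CS)
        (Δ ∪ NegInst (Function.update v q (Fml.all x φ)) F) →
      ∃ a : Nat,
        Consistent Logic.folpb (CSV CS)
          (Δ ∪ NegInst (Function.update v q (φ.subst (Sum.inl x) (Sum.inr a))) F)

/-! ### Fitting models -/

/-- A Fitting model for FOLPb with constant domain `D`. -/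
structure FModel (D : Type) [DecidableEq D] where
  W : Type
  nonempty : Nonempty W
  R : W → W → Prop
  refl : ∀ w, R w w
  trans : ∀ {u v w}, R u v → R v w → R u w
  I : Nat → W → List D → Prop
  E : JTerm → Fml D → Set W
  condApp : ∀ (t s : JTerm) (φ ψ : Fml D), E t (φ.imp ψ) ∩ E s φ ⊆ E (t.app s) ψ
  condPlus : ∀ (t s : JTerm) (φ : Fml D), E t φ ∪ E s φ ⊆ E (t.plus s) φ
  condBang : ∀ (t : JTerm) (φ : Fml D) (X : Finset (Nat ⊕ D)),
    (∀ x ∈ X, x.isRight = true) → φ.wvars ⊆ X →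
    E t φ ⊆ E t.bang (Fml.box t X φ)
  condClosure : ∀ (t : JTerm) (φ : Fml D) {w w'},
    w ∈ E t φ → R w w' → w' ∈ E t φ
  condInst : ∀ (t : JTerm) (φ : Fml D) (x : Nat) (a : D) {w},
    w ∈ E t φ → w ∈ E t (φ.subst (Sum.inl x) (Sum.inr a))
  condGen : ∀ (t : JTerm) (φ : Fml D) (x : Nat), E t φ ⊆ E (t.gen x) (Fml.all x φ)
  condB : ∀ (t : JTerm) (φ : Fml D) (y : Nat) {w},
    (∀ a : D, w ∈ E t (φ.subst (Sum.inl y) (Sum.inr a))) →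
    w ∈ E t.bb (Fml.all y φ)

/-- Truth of a (closed) `D`-formula at a world. -/
def Truth {D : Type} [DecidableEq D] (M : FModel D) : M.W → Fml D → Prop
  | w, .atom P l => ∃ ds : List D, l = ds.map Sum.inr ∧ M.I P w ds
  | _, .bot => False
  | w, .imp φ ψ => Truth M w φ → Truth M w ψ
  | w, .all x φ => ∀ a : D, Truth M w (φ.subst (Sum.inl x) (Sum.inr a))
  | w, .box t _ φ => w ∈ M.E t φ ∧
      ∀ w', M.R w w' → ∀ σ : Nat → Nat ⊕ D, (∀ n, ∃ a : D, σ n = Sum.inr a) →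
        Truth M w' (φ.instAll σ)
  termination_by _ φ => φ.size
  decreasing_by
    all_goals simp [Fml.size, Fml.size_subst, Fml.size_instAll]
    all_goals omega

/-- A basic-language formula as a `D`-formula. -/
def toD {D : Type} [DecidableEq D] : FmlB → Fml D := Fml.vmap fun e => e.elim

/-- Validity in a model: the universal closure is true at every world. -/
def Valid {D : Type} [DecidableEq D] (M : FModel D) (φ : FmlB) : Prop :=
  ∀ w : M.W, Truth M w (toD φ.close)

/-- The model meets the constant specification `CS`. -/
def Meets {D : Type} [DecidableEq D] (M : FModel D) (CS : Set FmlB) : Prop :=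
  ∀ (c : Nat) (φ : FmlB), Fml.box (JTerm.jconst c) ∅ φ ∈ CS →
    ∀ w : M.W, w ∈ M.E (JTerm.jconst c) (toD φ)

section Aux
open Fml

/-- Replacement map on variables. -/
def rr (a y : Nat) : (Nat ⊕ Nat) → (Nat ⊕ Nat) := fun v => if v = Sum.inr a then Sum.inl y else v

@[simp] theorem rr_inl (a y n : Nat) : rr a y (Sum.inl n) = Sum.inl n := by simp [rr]

theorem rr_eq_inl {a y x : Nat} (hxy : x ≠ y) (v : Nat ⊕ Nat) :
    rr a y v = Sum.inl x ↔ v = Sum.inl x := by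
  unfold rr; split
  · constructor
    · rintro h; simp at h; exact absurd h.symm (by simpa using hxy)
    · rintro rfl; simp_all
  · simp

theorem replaceAll_imp (a y : Nat) (φ ψ : FmlW) :
    Fml.replaceAll (Sum.inr a) (Sum.inl y) (φ.imp ψ)
      = (Fml.replaceAll (Sum.inr a) (Sum.inl y) φ).imp (Fml.replaceAll (Sum.inr a) (Sum.inl y) ψ) := rfl

theorem replaceAll_all (a y x : Nat) (φ : FmlW) :
    Fml.replaceAll (Sum.inr a) (Sum.inl y) (Fml.all x φ)
      = Fml.all x (Fml.replaceAll (Sum.inr a) (Sum.inl y) φ) := rfl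

theorem replaceAll_box (a y : Nat) (t : JTerm) (X : Finset (Nat ⊕ Nat)) (φ : FmlW) :
    Fml.replaceAll (Sum.inr a) (Sum.inl y) (Fml.box t X φ)
      = Fml.box t (X.image (rr a y)) (Fml.replaceAll (Sum.inr a) (Sum.inl y) φ) := rfl

theorem fv_subset_allVars {V : Type} [DecidableEq V] : ∀ φ : Fml V, φ.fv ⊆ φ.allVars := by
  intro φ
  induction φ with
  | atom P l => simp [Fml.fv, Fml.allVars]
  | bot => simp [Fml.fv, Fml.allVars]
  | imp φ ψ ih1 ih2 => exact Finset.union_subset_union ih1 ih2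
  | all x φ ih =>
      intro v hv
      simp only [Fml.fv, Finset.mem_sdiff] at hv
      exact Finset.mem_insert_of_mem (ih hv.1)
  | box t X φ ih =>
      intro v hv
      simp only [Fml.allVars, Finset.mem_union]
      exact Or.inl (Or.inl hv)

theorem mem_image_rr {a y : Nat} {s : Finset (Nat ⊕ Nat)} (hs : Sum.inl y ∉ s)
    {v : Nat ⊕ Nat} (hv : v ≠ Sum.inl y) :
    rr a y v ∈ s.image (rr a y) ↔ v ∈ s := by
  constructor
  · intro h
    obtain ⟨u, hu, huv⟩ := Finset.mem_image.mp h
    rcases eq_or_ne u (Sum.inr a) with rfl | hua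
    · rcases eq_or_ne v (Sum.inr a) with rfl | hva
      · exact hu
      · simp [rr, hva] at huv; exact absurd huv.symm hv
    · rcases eq_or_ne v (Sum.inr a) with rfl | hva
      · simp [rr, hua] at huv; subst huv; exact absurd hu hs
      · simp [rr, hua, hva] at huv; subst huv; exact hu
  · intro h; exact Finset.mem_image_of_mem _ h

end Aux
section Aux2
open Fml

theorem fv_replaceAll {a y : Nat} : ∀ {φ : FmlW}, Sum.inl y ∉ φ.allVars →
    (Fml.replaceAll (Sum.inr a) (Sum.inl y) φ).fv = φ.fv.image (rr a y) := by
  intro φ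
  induction φ with
  | atom P l =>
      intro _
      simp only [Fml.replaceAll, Fml.fv]
      ext v; simp [rr]
  | bot => intro _; simp [Fml.replaceAll, Fml.fv]
  | imp φ ψ ih1 ih2 =>
      intro h
      simp only [Fml.allVars, Finset.mem_union, not_or] at h
      simp [Fml.replaceAll, Fml.fv, ih1 h.1, ih2 h.2, Finset.image_union]
  | all x φ ih =>
      intro h
      simp only [Fml.allVars, Finset.mem_insert, not_or] at h
      have hxy : x ≠ y := fun hxx => h.1 (by simp [hxx])
      rw [replaceAll_all]
      simp only [Fml.fv, ih h.2]
      ext v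
      simp only [Finset.mem_sdiff, Finset.mem_image, Finset.mem_singleton]
      constructor
      · rintro ⟨⟨u, hu, rfl⟩, hne⟩
        refine ⟨u, ⟨hu, ?_⟩, rfl⟩
        rintro rfl; exact hne (by simp)
      · rintro ⟨u, ⟨hu, hne⟩, rfl⟩
        refine ⟨⟨u, hu, rfl⟩, ?_⟩
        intro hrr
        exact hne ((rr_eq_inl hxy u).mp hrr)
  | box t X φ ih =>
      intro h
      rw [replaceAll_box]
      simp [Fml.fv]

theorem replaceAll_subst {a y x : Nat} (hxy : x ≠ y) (e : Nat ⊕ Nat) :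
    ∀ φ : FmlW,
    Fml.replaceAll (Sum.inr a) (Sum.inl y) (φ.subst (Sum.inl x) e)
      = (Fml.replaceAll (Sum.inr a) (Sum.inl y) φ).subst (Sum.inl x) (rr a y e) := by
  intro φ
  have key : ∀ v : Nat ⊕ Nat,
      rr a y (if v = Sum.inl x then e else v)
        = (if rr a y v = Sum.inl x then rr a y e else rr a y v) := by
    intro v
    rcases eq_or_ne v (Sum.inl x) with rfl | hv
    · simp
    · rw [if_neg hv, if_neg (fun hc => hv ((rr_eq_inl hxy v).mp hc))]
  induction φ with
  | atom P l =>
      simp only [Fml.subst, Fml.replaceAll, List.map_map]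
      congr 1
      apply List.map_congr_left
      intro v _
      exact key v
  | bot => rfl
  | imp φ ψ ih1 ih2 => simp [Fml.subst, Fml.replaceAll, ih1, ih2]
  | all z φ ih =>
      rcases eq_or_ne (Sum.inl x : Nat ⊕ Nat) (Sum.inl z) with hxz | hxz
      · simp [Fml.subst, hxz, replaceAll_all]
      · simp [Fml.subst, hxz, replaceAll_all, ih]
  | box t X φ ih =>
      by_cases hX : (Sum.inl x : Nat ⊕ Nat) ∈ X
      · have hX' : (Sum.inl x : Nat ⊕ Nat) ∈ X.image (rr a y) := by
          simpa using Finset.mem_image_of_mem (rr a y) hX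
        rw [Fml.subst, if_pos hX, replaceAll_box, replaceAll_box, Fml.subst, if_pos hX', ih]
        congr 1
        rw [Finset.image_image, Finset.image_image]
        apply Finset.image_congr
        intro v _
        exact key v
      · have hX' : (Sum.inl x : Nat ⊕ Nat) ∉ X.image (rr a y) := by
          intro hc
          obtain ⟨u, hu, huv⟩ := Finset.mem_image.mp hc
          exact hX (((rr_eq_inl hxy u).mp huv) ▸ hu)
        rw [Fml.subst, if_neg hX, replaceAll_box, Fml.subst, if_neg hX']

end Aux2
section Aux3
open Fml

theorem freeFor_replaceAll {a y x : Nat} {e : Nat ⊕ Nat} (hxy : x ≠ y) (hey : e ≠ Sum.inl y) :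
    ∀ {φ : FmlW}, Sum.inl y ∉ φ.allVars → φ.freeFor e (Sum.inl x) →
    (Fml.replaceAll (Sum.inr a) (Sum.inl y) φ).freeFor (rr a y e) (Sum.inl x) := by
  intro φ
  induction φ with
  | atom P l => intro _ _; trivial
  | bot => intro _ _; trivial
  | imp φ ψ ih1 ih2 =>
      intro hy h
      simp only [Fml.allVars, Finset.mem_union, not_or] at hy
      exact ⟨ih1 hy.1 h.1, ih2 hy.2 h.2⟩
  | all z φ ih =>
      intro hy h
      simp only [Fml.allVars, Finset.mem_insert, not_or] at hy
      have hzy : z ≠ y := fun hzz => hy.1 (by simp [hzz])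
      rcases h with h | ⟨hez, hf⟩
      · left
        simp only [Fml.fv, Finset.mem_sdiff, Finset.mem_singleton, not_and, not_not] at h ⊢
        intro hmem
        rw [fv_replaceAll hy.2] at hmem
        obtain ⟨u, hu, huv⟩ := Finset.mem_image.mp hmem
        have := (rr_eq_inl hxy u).mp huv
        subst this
        exact h hu
      · right
        constructor
        · intro hc
          rcases eq_or_ne e (Sum.inr a) with rfl | hea
          · simp [rr] at hc; exact hzy hc.symm
          · simp [rr, hea] at hc; exact hez hc
        · exact ih hy.2 hf
  | box t X φ ih =>
      intro hy h
      simp only [Fml.allVars, Finset.mem_union, not_or] at hy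
      rw [replaceAll_box]
      refine ⟨ih hy.2 h.1, ?_⟩
      intro hmem
      rw [fv_replaceAll hy.2] at hmem
      have hyfv : Sum.inl y ∉ φ.fv := fun hc => hy.2 (fv_subset_allVars φ hc)
      have := (mem_image_rr hyfv hey).mp hmem
      exact Finset.mem_image_of_mem _ (h.2 this)
end Aux3
section Aux4
open Fml

/-- Basic names of all variables. -/
def Bv (χ : FmlW) : Finset Nat := χ.allVars.image (Sum.elim id id)

theorem mem_Bv {χ : FmlW} {n : Nat} (h : Sum.inl n ∈ χ.allVars) : n ∈ Bv χ := by
  exact Finset.mem_image_of_mem _ h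

theorem notMem_allVars_of_notMem_Bv {χ : FmlW} {n : Nat} (h : n ∉ Bv χ) :
    Sum.inl n ∉ χ.allVars := fun hc => h (mem_Bv hc)

theorem notin_image_rr {a y : Nat} {X : Finset (Nat ⊕ Nat)} {x : Nat} (hxy : x ≠ y)
    (h : Sum.inl x ∉ X) : Sum.inl x ∉ X.image (rr a y) := by
  intro hc
  obtain ⟨u, hu, huv⟩ := Finset.mem_image.mp hc
  exact h (((rr_eq_inl hxy u).mp huv) ▸ hu)

theorem isAxiom_replaceAll {L : Logic} (a : Nat) {χ : FmlW} (h : IsAxiom L χ) :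
    ∃ S : Finset Nat, (∀ n, Sum.inl n ∈ χ.allVars → n ∈ S) ∧
      ∀ y ∉ S, IsAxiom L (Fml.replaceAll (Sum.inr a) (Sum.inl y) χ) := by
  cases h with
  | a1k L φ ψ =>
      exact ⟨Bv _, fun n hn => mem_Bv hn, fun y _ => IsAxiom.a1k L _ _⟩
  | a1s L φ ψ χ =>
      exact ⟨Bv _, fun n hn => mem_Bv hn, fun y _ => IsAxiom.a1s L _ _ _⟩
  | a1dne L φ =>
      exact ⟨Bv _, fun n hn => mem_Bv hn, fun y _ => IsAxiom.a1dne L _⟩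
  | a1inst L x e φ hf =>
      refine ⟨Bv _ ∪ {Sum.elim id id e}, fun n hn => Finset.mem_union_left _ (mem_Bv hn), ?_⟩
      intro y hy
      simp only [Finset.mem_union, Finset.mem_singleton, not_or] at hy
      have hyav : Sum.inl y ∉ (Fml.imp (Fml.all x φ) (φ.subst (Sum.inl x) e)).allVars :=
        notMem_allVars_of_notMem_Bv hy.1
      simp only [Fml.allVars, Finset.mem_union, Finset.mem_insert, not_or] at hyav
      have hxy : x ≠ y := fun hc => hyav.1.1 (by simp [hc])
      have hey : e ≠ Sum.inl y := by
        intro hc; subst hc; exact hy.2 rfl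
      rw [replaceAll_imp, replaceAll_all, replaceAll_subst hxy e]
      exact IsAxiom.a1inst L x (rr a y e) _
        (freeFor_replaceAll hxy hey hyav.1.2 hf)
  | a1allImp L x φ ψ =>
      refine ⟨Bv _, fun n hn => mem_Bv hn, ?_⟩
      intro y hy
      exact IsAxiom.a1allImp L x _ _
  | a1vac L x φ hx =>
      refine ⟨Bv _, fun n hn => mem_Bv hn, ?_⟩
      intro y hy
      have hyav := notMem_allVars_of_notMem_Bv hy
      simp only [Fml.allVars, Finset.mem_union, Finset.mem_insert, not_or] at hyav
      have hxy : x ≠ y := fun hc => hyav.2.1 (by simp [hc])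
      rw [replaceAll_imp, replaceAll_all]
      refine IsAxiom.a1vac L x _ ?_
      rw [fv_replaceAll hyav.2.2]
      exact notin_image_rr hxy hx
  | a2 L t X w φ hw =>
      refine ⟨Bv _, fun n hn => mem_Bv hn, ?_⟩
      intro y hy
      have hyav := notMem_allVars_of_notMem_Bv hy
      simp only [Fml.allVars, Finset.mem_union, not_or] at hyav
      have hwX : w ∈ (Fml.box t (insert w X) φ).allVars := by
        simp [Fml.allVars]
      have hwy : w ≠ Sum.inl y := by
        rintro rfl
        exact hyav.1.1.1 (by simp [Fml.allVars])
      have hyφ : Sum.inl y ∉ φ.allVars := hyav.1.2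
      rw [replaceAll_imp, replaceAll_box, replaceAll_box, Finset.image_insert]
      refine IsAxiom.a2 L t _ (rr a y w) _ ?_
      rw [fv_replaceAll hyφ]
      have hyfv : Sum.inl y ∉ φ.fv := fun hc => hyφ (fv_subset_allVars φ hc)
      exact fun hc => hw ((mem_image_rr hyfv hwy).mp hc)
  | a3 L t X w φ =>
      refine ⟨Bv _, fun n hn => mem_Bv hn, ?_⟩
      intro y hy
      rw [replaceAll_imp, replaceAll_box, replaceAll_box, Finset.image_insert]
      exact IsAxiom.a3 L t _ _ _
  | b1 L t X φ =>
      exact ⟨Bv _, fun n hn => mem_Bv hn, fun y _ => IsAxiom.b1 L t _ _⟩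
  | b2 L t s X φ ψ =>
      exact ⟨Bv _, fun n hn => mem_Bv hn, fun y _ => IsAxiom.b2 L t s _ _ _⟩
  | b3l L t s X φ =>
      exact ⟨Bv _, fun n hn => mem_Bv hn, fun y _ => IsAxiom.b3l L t s _ _⟩
  | b3r L t s X φ =>
      exact ⟨Bv _, fun n hn => mem_Bv hn, fun y _ => IsAxiom.b3r L t s _ _⟩
  | b4 L t X φ =>
      exact ⟨Bv _, fun n hn => mem_Bv hn, fun y _ => IsAxiom.b4 L t _ _⟩
  | b5 L t X x φ hx =>
      refine ⟨Bv _, fun n hn => mem_Bv hn, ?_⟩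
      intro y hy
      have hyav := notMem_allVars_of_notMem_Bv hy
      have hxy : x ≠ y := by
        rintro rfl
        apply hyav
        simp [Fml.allVars, JTerm.gvars]
      rw [replaceAll_imp, replaceAll_box, replaceAll_box, replaceAll_all]
      exact IsAxiom.b5 L t _ x _ (notin_image_rr hxy hx)
  | bb t X w φ hw =>
      refine ⟨Bv _, fun n hn => mem_Bv hn, ?_⟩
      intro y hy
      have hyav := notMem_allVars_of_notMem_Bv hy
      have hwy : w ≠ y := by
        rintro rfl
        apply hyav
        simp [Fml.allVars]
      rw [replaceAll_imp, replaceAll_all, replaceAll_box, replaceAll_box, replaceAll_all,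
        Finset.image_insert]
      have : rr a y (Sum.inl w) = Sum.inl w := by simp
      rw [this]
      exact IsAxiom.bb t _ w _ (notin_image_rr hwy hw)
  | b6 t X φ =>
      refine ⟨Bv _, fun n hn => mem_Bv hn, ?_⟩
      intro y hy
      exact IsAxiom.b6 t (X.image (rr a y)) (Fml.replaceAll (Sum.inr a) (Sum.inl y) φ)
end Aux4
section Aux5
open Fml

/-- Embedding of basic-variable names. -/
def jB : (Nat ⊕ Empty) → (Nat ⊕ Nat) := Sum.map id (fun e => e.elim)

theorem jB_inl (n : Nat) : jB (Sum.inl n) = Sum.inl n := rfl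

theorem jB_cases (v : Nat ⊕ Empty) : ∃ n, v = Sum.inl n := by
  rcases v with n | e
  · exact ⟨n, rfl⟩
  · exact e.elim

theorem jB_inj : Function.Injective jB := by
  intro u v h
  obtain ⟨n, rfl⟩ := jB_cases u
  obtain ⟨m, rfl⟩ := jB_cases v
  simpa [jB] using h

/-- `renameFree` on a lifted basic formula only depends on values at `inl`. -/
theorem renameFree_liftB_congr : ∀ (θ : FmlB) (ρ₁ ρ₂ : (Nat ⊕ Nat) → (Nat ⊕ Nat)),
    (∀ n, ρ₁ (Sum.inl n) = ρ₂ (Sum.inl n)) →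
    Fml.renameFree ρ₁ (liftB θ) = Fml.renameFree ρ₂ (liftB θ) := by
  intro θ
  induction θ with
  | atom P l =>
      intro ρ₁ ρ₂ h
      simp only [liftB, Fml.vmap, Fml.renameFree, List.map_map]
      congr 1
      apply List.map_congr_left
      intro v _
      obtain ⟨n, rfl⟩ := jB_cases v
      exact h n
  | bot => intro _ _ _; rfl
  | imp φ ψ ih1 ih2 =>
      intro ρ₁ ρ₂ h
      simp only [liftB, Fml.vmap, Fml.renameFree]
      rw [show Fml.vmap (fun e => e.elim) φ = liftB φ from rfl,
        show Fml.vmap (fun e => e.elim) ψ = liftB ψ from rfl, ih1 _ _ h, ih2 _ _ h]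
  | all z φ ih =>
      intro ρ₁ ρ₂ h
      simp only [liftB, Fml.vmap, Fml.renameFree]
      rw [show Fml.vmap (fun e => e.elim) φ = liftB φ from rfl]
      congr 1
      apply ih
      intro n
      rcases eq_or_ne (Sum.inl n : Nat ⊕ Nat) (Sum.inl z) with hz | hz
      · rw [hz, Function.update_self, Function.update_self]
      · rw [Function.update_of_ne hz, Function.update_of_ne hz]
        exact h n
  | box t X φ ih =>
      intro ρ₁ ρ₂ h
      simp only [liftB, Fml.vmap, Fml.renameFree]
      rw [show Fml.vmap (fun e => e.elim) φ = liftB φ from rfl]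
      have hX : Finset.image ρ₁ (X.image (Sum.map id fun e => e.elim))
          = Finset.image ρ₂ (X.image (Sum.map id fun e => e.elim)) := by
        apply Finset.image_congr
        intro v hv
        obtain ⟨u, _, rfl⟩ := Finset.mem_image.mp hv
        obtain ⟨n, rfl⟩ := jB_cases u
        exact h n
      rw [hX]
      congr 1
      apply ih
      intro n
      by_cases hn : (Sum.inl n : Nat ⊕ Nat) ∈ X.image (Sum.map id fun e => e.elim)
      · simp only [hn, if_pos]
        exact h n
      · simp only [hn, if_neg, ite_false]
end Aux5
section Aux6
open Fml

/-- `replaceAll` after a rename of a lifted basic formula is a rename. -/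
theorem replaceAll_renameFree_liftB (a y : Nat) :
    ∀ (θ : FmlB) (ρ : (Nat ⊕ Nat) → (Nat ⊕ Nat)),
    Fml.replaceAll (Sum.inr a) (Sum.inl y) (Fml.renameFree ρ (liftB θ))
      = Fml.renameFree (fun v => rr a y (ρ v)) (liftB θ) := by
  intro θ
  induction θ with
  | atom P l =>
      intro ρ
      simp only [liftB, Fml.vmap, Fml.renameFree, Fml.replaceAll, List.map_map]
      congr 1
  | bot => intro _; rfl
  | imp φ ψ ih1 ih2 =>
      intro ρ
      simp only [liftB, Fml.vmap, Fml.renameFree, Fml.replaceAll]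
      rw [show Fml.vmap (fun e => e.elim) φ = liftB φ from rfl,
        show Fml.vmap (fun e => e.elim) ψ = liftB ψ from rfl, ih1, ih2]
  | all z φ ih =>
      intro ρ
      simp only [liftB, Fml.vmap, Fml.renameFree, Fml.replaceAll]
      rw [show Fml.vmap (fun e => e.elim) φ = liftB φ from rfl, ih]
      congr 1
      apply renameFree_liftB_congr
      intro n
      rcases eq_or_ne (Sum.inl n : Nat ⊕ Nat) (Sum.inl z) with hz | hz
      · rw [hz, Function.update_self, Function.update_self, rr_inl]
      · rw [Function.update_of_ne hz, Function.update_of_ne hz]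
  | box t X φ ih =>
      intro ρ
      simp only [liftB, Fml.vmap, Fml.renameFree, Fml.replaceAll]
      rw [show Fml.vmap (fun e => e.elim) φ = liftB φ from rfl, ih]
      rw [Finset.image_image]
      congr 1
      apply renameFree_liftB_congr
      intro n
      by_cases hn : (Sum.inl n : Nat ⊕ Nat) ∈ X.image (Sum.map id fun e => e.elim)
      · simp only [hn, if_pos]
      · simp only [hn, if_neg, ite_false, rr_inl]
end Aux6
section Aux7
open Fml

theorem allVars_box_sub {V : Type} [DecidableEq V] (t : JTerm) (X : Finset (Nat ⊕ V))
    (φ : Fml V) : φ.allVars ⊆ (Fml.box t X φ).allVars := by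
  intro v hv
  simp only [Fml.allVars, Finset.mem_union]
  exact Or.inr hv

theorem X_sub_allVars_box {V : Type} [DecidableEq V] (t : JTerm) (X : Finset (Nat ⊕ V))
    (φ : Fml V) : X ⊆ (Fml.box t X φ).allVars := by
  intro v hv
  simp only [Fml.allVars, Finset.mem_union]
  exact Or.inl (Or.inl hv)

theorem renameFree_liftB_renameFree :
    ∀ (θ : FmlB) (π : (Nat ⊕ Empty) → (Nat ⊕ Empty)) (σ₁ σ₂ : (Nat ⊕ Nat) → (Nat ⊕ Nat)),
    (∀ v ∈ θ.fv, σ₂ (jB (π v)) = σ₁ (jB v)) →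
    (∀ n z, Sum.inl z ∈ θ.allVars → π (Sum.inl n) = Sum.inl z →
      n = z ∨ Sum.inl n ∉ θ.allVars) →
    Fml.renameFree σ₂ (liftB (Fml.renameFree π θ)) = Fml.renameFree σ₁ (liftB θ) := by
  intro θ
  induction θ with
  | atom P l =>
      intro π σ₁ σ₂ h1 _
      simp only [liftB, Fml.vmap, Fml.renameFree, List.map_map]
      congr 1
      apply List.map_congr_left
      intro v hv
      exact h1 v (by simp [Fml.fv, List.mem_toFinset.mpr hv])
  | bot => intro _ _ _ _ _; rfl
  | imp φ ψ ih1 ih2 =>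
      intro π σ₁ σ₂ h1 h2
      simp only [Fml.renameFree, liftB, Fml.vmap]
      rw [show Fml.vmap (fun e => e.elim) (Fml.renameFree π φ) = liftB (Fml.renameFree π φ) from rfl,
        show Fml.vmap (fun e => e.elim) (Fml.renameFree π ψ) = liftB (Fml.renameFree π ψ) from rfl,
        show Fml.vmap (fun e => e.elim) φ = liftB φ from rfl,
        show Fml.vmap (fun e => e.elim) ψ = liftB ψ from rfl]
      rw [ih1 π σ₁ σ₂ (fun v hv => h1 v (Finset.mem_union_left _ hv))
        (fun n z hz hπ => (h2 n z (Finset.mem_union_left _ hz) hπ).imp_right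
          (fun h hc => h (Finset.mem_union_left _ hc))),
        ih2 π σ₁ σ₂ (fun v hv => h1 v (Finset.mem_union_right _ hv))
        (fun n z hz hπ => (h2 n z (Finset.mem_union_right _ hz) hπ).imp_right
          (fun h hc => h (Finset.mem_union_right _ hc)))]
  | all z φ ih =>
      intro π σ₁ σ₂ h1 h2
      simp only [Fml.renameFree, liftB, Fml.vmap]
      rw [show Fml.vmap (fun e => e.elim) (Fml.renameFree _ φ) = liftB (Fml.renameFree _ φ) from rfl,
        show Fml.vmap (fun e => e.elim) φ = liftB φ from rfl]
      congr 1
      apply ih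
      · intro v hv
        obtain ⟨n, rfl⟩ := jB_cases v
        rcases eq_or_ne n z with rfl | hnz
        · rw [Function.update_self]
          show Function.update σ₂ (Sum.inl n) (Sum.inl n) (jB (Sum.inl n))
            = Function.update σ₁ (Sum.inl n) (Sum.inl n) (jB (Sum.inl n))
          rw [jB_inl, Function.update_self, Function.update_self]
        · have hne : (Sum.inl n : Nat ⊕ Empty) ≠ Sum.inl z := by simpa using hnz
          have hne' : (Sum.inl n : Nat ⊕ Nat) ≠ Sum.inl z := by simpa using hnz
          rw [Function.update_of_ne hne, jB_inl, Function.update_of_ne hne']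
          have hfv : Sum.inl n ∈ (Fml.all z φ).fv := by
            simp only [Fml.fv, Finset.mem_sdiff, Finset.mem_singleton]
            exact ⟨hv, hne⟩
          have hπ : π (Sum.inl n) ≠ Sum.inl z := by
            intro hc
            rcases h2 n z (Finset.mem_insert_self _ _) hc with h | h
            · exact hnz h
            · exact h (Finset.mem_insert_of_mem (fv_subset_allVars φ hv))
          obtain ⟨m, hm⟩ := jB_cases (π (Sum.inl n))
          have hmz : m ≠ z := by
            intro hc; apply hπ; rw [hm, hc]
          rw [hm, jB_inl, Function.update_of_ne (by simpa using hmz), ← jB_inl m, ← hm]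
          exact h1 _ hfv
      · intro n w hz hπ
        rcases eq_or_ne n z with rfl | hnz
        · rw [Function.update_self] at hπ
          exact Or.inl (by simpa using hπ)
        · have hne : (Sum.inl n : Nat ⊕ Empty) ≠ Sum.inl z := by simpa using hnz
          rw [Function.update_of_ne hne] at hπ
          rcases h2 n w (Finset.mem_insert_of_mem hz) hπ with h | h
          · exact Or.inl h
          · exact Or.inr fun hc => h (Finset.mem_insert_of_mem hc)
  | box t X φ ih =>
      intro π σ₁ σ₂ h1 h2
      simp only [Fml.renameFree, liftB, Fml.vmap]
      rw [show Fml.vmap (fun e => e.elim) (Fml.renameFree _ φ) = liftB (Fml.renameFree _ φ) from rfl,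
        show Fml.vmap (fun e => e.elim) φ = liftB φ from rfl,
        show ((Sum.map id fun e => e.elim) : (Nat ⊕ Empty) → (Nat ⊕ Nat)) = jB from rfl]
      have hXfv : ∀ v ∈ X, v ∈ (Fml.box t X φ).fv := fun v hv => hv
      have hset : ((X.image π).image jB).image σ₂ = (X.image jB).image σ₁ := by
        simp only [Finset.image_image]
        apply Finset.image_congr
        intro v hv
        simp only [Function.comp]
        exact h1 v (hXfv v hv)
      rw [hset]
      congr 1
      apply ih
      · intro v hv
        obtain ⟨n, rfl⟩ := jB_cases v
        by_cases hn : (Sum.inl n : Nat ⊕ Empty) ∈ X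
        · rw [if_pos hn]
          have hmem2 : jB (π (Sum.inl n)) ∈ (X.image π).image jB :=
            Finset.mem_image_of_mem _ (Finset.mem_image_of_mem _ hn)
          have hmem1 : jB (Sum.inl n) ∈ X.image jB := Finset.mem_image_of_mem _ hn
          rw [if_pos hmem2, if_pos hmem1]
          exact h1 _ (hXfv _ hn)
        · rw [if_neg hn]
          have hnAll : Sum.inl n ∈ (Fml.box t X φ).allVars :=
            allVars_box_sub t X φ (fv_subset_allVars φ hv)
          have hmem2 : jB (Sum.inl n) ∉ (X.image π).image jB := by
            intro hc
            obtain ⟨u, hu, huv⟩ := Finset.mem_image.mp hc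
            have hu' := jB_inj huv
            obtain ⟨u2, hu2, huv2⟩ := Finset.mem_image.mp hu
            obtain ⟨m, rfl⟩ := jB_cases u2
            rcases h2 m n hnAll (huv2.trans hu') with h | h
            · subst h; exact hn hu2
            · exact h (X_sub_allVars_box t X φ hu2)
          have hmem1 : jB (Sum.inl n) ∉ X.image jB := by
            intro hc
            obtain ⟨u, hu, huv⟩ := Finset.mem_image.mp hc
            exact hn (jB_inj huv ▸ hu)
          rw [if_neg hmem2, if_neg hmem1]
      · intro n w hz hπ
        by_cases hn : (Sum.inl n : Nat ⊕ Empty) ∈ X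
        · rw [if_pos hn] at hπ
          rcases h2 n w (allVars_box_sub t X φ hz) hπ with h | h
          · exact Or.inl h
          · exact Or.inr fun hc => h (allVars_box_sub t X φ hc)
        · rw [if_neg hn] at hπ
          exact Or.inl (by simpa using hπ)
end Aux7
section Aux8
open Fml

def BvB (θ : FmlB) : Finset Nat := θ.allVars.image (Sum.elim id (fun e => e.elim))

theorem rr_of_ne {a y : Nat} {v : Nat ⊕ Nat} (h : v ≠ Sum.inr a) : rr a y v = v := if_neg h

theorem csv_replaceAll (CS : Set FmlB) (hvc : VariantClosed CS) (a : Nat) {χ : FmlW}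
    (hχ : χ ∈ CSV CS) :
    ∃ S : Finset Nat, (∀ n, Sum.inl n ∈ χ.allVars → n ∈ S) ∧
      ∀ y ∉ S, Fml.replaceAll (Sum.inr a) (Sum.inl y) χ ∈ CSV CS := by
  classical
  obtain ⟨c, φ₀, ρ, hmem, hinj, hfix, hshape, rfl⟩ := hχ
  refine ⟨Bv (Fml.box (JTerm.jconst c) ∅ (Fml.renameFree ρ (liftB φ₀))) ∪ BvB φ₀ ∪
    (if h : ∃ n, ρ (Sum.inl n) = Sum.inr a then {h.choose} else ∅),
    fun n hn => Finset.mem_union_left _ (Finset.mem_union_left _ (mem_Bv hn)), ?_⟩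
  intro y hy
  simp only [Finset.mem_union, not_or] at hy
  have hyφ₀ : Sum.inl y ∉ φ₀.allVars := by
    intro hc
    exact hy.1.2 (Finset.mem_image_of_mem _ hc)
  rw [replaceAll_box, Finset.image_empty, replaceAll_renameFree_liftB]
  by_cases hex : ∃ n, ρ (Sum.inl n) = Sum.inr a
  · have hn₀ : ρ (Sum.inl hex.choose) = Sum.inr a := hex.choose_spec
    set n₀ := hex.choose with hn₀def
    have hyn₀ : y ≠ n₀ := by
      intro hc
      apply hy.2
      rw [dif_pos hex]
      simp [hc, hn₀def]
    have hane : ∀ n, n ≠ n₀ → ρ (Sum.inl n) ≠ Sum.inr a := by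
      intro n hn hc
      exact hn (by simpa using hinj (hc.trans hn₀.symm))
    have hnoty : ∀ k, k ≠ y → k ≠ n₀ → ρ (Sum.inl k) ≠ Sum.inl y ∧ ρ (Sum.inl k) ≠ Sum.inl n₀ := by
      intro k h1 h2
      rcases hshape k with h | ⟨m, h⟩
      · rw [h]
        exact ⟨by simpa using h1, by simpa using h2⟩
      · rw [h]
        exact ⟨by simp, by simp⟩
    set π := Equiv.swap (Sum.inl n₀ : Nat ⊕ Empty) (Sum.inl y) with hπdef
    set ρ'' : (Nat ⊕ Nat) → (Nat ⊕ Nat) := Sum.elim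
      (fun n => if n = y then Sum.inl y else if n = n₀ then Sum.inl n₀
          else rr a y (ρ (Sum.inl n))) Sum.inr with hρ''
    have e1 : ∀ k, ρ'' (Sum.inl k) = if k = y then Sum.inl y else if k = n₀ then Sum.inl n₀
        else rr a y (ρ (Sum.inl k)) := fun _ => rfl
    have e2 : ∀ m, ρ'' (Sum.inr m) = Sum.inr m := fun _ => rfl
    have hval2 : ∀ k, k ≠ y → k ≠ n₀ → ρ'' (Sum.inl k) = ρ (Sum.inl k) := by
      intro k h1 h2
      rw [e1, if_neg h1, if_neg h2]
      exact rr_of_ne (hane k h2)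
    have hmem' : Fml.box (JTerm.jconst c) ∅ (Fml.renameFree (⇑π) φ₀) ∈ CS :=
      (hvc φ₀ _ c ⟨⇑π, π.bijective, rfl⟩).mp hmem
    refine ⟨c, Fml.renameFree (⇑π) φ₀, ρ'', hmem', ?_, fun m => rfl, ?_, ?_⟩
    · -- injectivity
      intro u v huv
      rcases u with k | m <;> rcases v with k' | m'
      · by_cases h1 : k = y
        · by_cases h2 : k' = y
          · rw [h1, h2]
          · by_cases h3 : k' = n₀
            · rw [e1, e1, if_pos h1, if_neg h2, if_pos h3] at huv
              exact absurd (by simpa using huv) hyn₀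
            · rw [e1, if_pos h1, hval2 k' h2 h3] at huv
              exact absurd huv.symm (hnoty k' h2 h3).1
        · by_cases h2 : k = n₀
          · by_cases h3 : k' = y
            · rw [e1, e1, if_neg h1, if_pos h2, if_pos h3] at huv
              exact absurd (by simpa using huv) hyn₀.symm
            · by_cases h4 : k' = n₀
              · rw [h2, h4]
              · rw [e1, if_neg h1, if_pos h2, hval2 k' h3 h4] at huv
                exact absurd huv.symm (hnoty k' h3 h4).2
          · rw [hval2 k h1 h2] at huv
            by_cases h3 : k' = y
            · rw [e1, if_pos h3] at huv
              exact absurd huv (hnoty k h1 h2).1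
            · by_cases h4 : k' = n₀
              · rw [e1, if_neg h3, if_pos h4] at huv
                exact absurd huv (hnoty k h1 h2).2
              · rw [hval2 k' h3 h4] at huv
                exact hinj huv
      · exfalso
        rw [e2] at huv
        by_cases h1 : k = y
        · rw [e1, if_pos h1] at huv; simp at huv
        · by_cases h2 : k = n₀
          · rw [e1, if_neg h1, if_pos h2] at huv; simp at huv
          · rw [hval2 k h1 h2] at huv
            have := hinj (huv.trans (hfix m').symm)
            simp at this
      · exfalso
        rw [e2] at huv
        by_cases h1 : k' = y
        · rw [e1, if_pos h1] at huv; simp at huv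
        · by_cases h2 : k' = n₀
          · rw [e1, if_neg h1, if_pos h2] at huv; simp at huv
          · rw [hval2 k' h1 h2] at huv
            have := hinj ((hfix m).trans huv)
            simp at this
      · rw [e2, e2] at huv
        exact huv
    · -- shape
      intro n
      by_cases h1 : n = y
      · subst h1; left; rw [e1, if_pos rfl]
      · by_cases h2 : n = n₀
        · subst h2; left; rw [e1, if_neg h1, if_pos rfl]
        · rw [hval2 n h1 h2]
          exact hshape n
    · -- the formula equality
      congr 1
      refine (renameFree_liftB_renameFree φ₀ (⇑π) (fun v => rr a y (ρ v)) ρ'' ?_ ?_).symm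
      · intro v hv
        obtain ⟨n, rfl⟩ := jB_cases v
        have hny : n ≠ y := by
          intro hc
          exact hyφ₀ (hc ▸ fv_subset_allVars φ₀ hv)
        by_cases h2 : n = n₀
        · subst h2
          rw [show π (Sum.inl n₀) = Sum.inl y from Equiv.swap_apply_left _ _]
          rw [jB_inl, jB_inl, e1, if_pos rfl]
          show _ = rr a y (ρ (Sum.inl n₀))
          rw [hn₀]
          simp [rr]
        · rw [show π (Sum.inl n) = Sum.inl n from
            Equiv.swap_apply_of_ne_of_ne (by simpa using h2) (by simpa using hny)]
          rw [jB_inl, hval2 n hny h2]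
          exact (rr_of_ne (hane n h2)).symm
      · intro n z hz hπ
        have hzy : z ≠ y := by
          intro hc
          exact hyφ₀ (hc ▸ hz)
        by_cases h2 : n = n₀
        · subst h2
          rw [show π (Sum.inl n₀) = Sum.inl y from Equiv.swap_apply_left _ _] at hπ
          exact absurd (by simpa using hπ.symm) hzy
        · by_cases h1 : n = y
          · subst h1
            exact Or.inr hyφ₀
          · rw [show π (Sum.inl n) = Sum.inl n from
              Equiv.swap_apply_of_ne_of_ne (by simpa using h2) (by simpa using h1)] at hπ
            exact Or.inl (by simpa using hπ)
  · push_neg at hex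
    rw [renameFree_liftB_congr φ₀ _ ρ (fun n => rr_of_ne (hex n))]
    exact ⟨c, φ₀, ρ, hmem, hinj, hfix, hshape, rfl⟩
end Aux8
section Aux9
open Fml

theorem deriv_replaceAll (CS : Set FmlB) (hvc : VariantClosed CS) (a : Nat) {χ : FmlW}
    (h : Deriv Logic.folpb (CSV CS) ∅ χ) :
    ∃ S : Finset Nat, (∀ n, Sum.inl n ∈ χ.allVars → n ∈ S) ∧
      ∀ y ∉ S, Deriv Logic.folpb (CSV CS) ∅ (Fml.replaceAll (Sum.inr a) (Sum.inl y) χ) := by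
  induction h with
  | ax hax =>
      obtain ⟨S, hc, hS⟩ := isAxiom_replaceAll a hax
      exact ⟨S, hc, fun y hy => Deriv.ax (hS y hy)⟩
  | cs hmem =>
      obtain ⟨S, hc, hS⟩ := csv_replaceAll CS hvc a hmem
      exact ⟨S, hc, fun y hy => Deriv.cs (hS y hy)⟩
  | hyp hmem => exact absurd hmem (Set.notMem_empty _)
  | mp h1 h2 ih1 ih2 =>
      obtain ⟨S1, hc1, hS1⟩ := ih1
      obtain ⟨S2, hc2, hS2⟩ := ih2
      refine ⟨S1 ∪ S2, fun n hn => Finset.mem_union_left _ (hc1 n (by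
        simp only [Fml.allVars, Finset.mem_union]
        exact Or.inr hn)), ?_⟩
      intro y hy
      simp only [Finset.mem_union, not_or] at hy
      exact Deriv.mp (hS1 y hy.1) (hS2 y hy.2)
  | @genR φ x h hside ih =>
      obtain ⟨S1, hc1, hS1⟩ := ih
      refine ⟨insert x S1, ?_, ?_⟩
      · intro n hn
        simp only [Fml.allVars, Finset.mem_insert] at hn
        rcases hn with hn | hn
        · exact Finset.mem_insert.mpr (Or.inl (by simpa using hn))
        · exact Finset.mem_insert_of_mem (hc1 n hn)
      · intro y hy
        simp only [Finset.mem_insert, not_or] at hy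
        exact Deriv.genR (hS1 y hy.2) (fun ψ hψ => absurd hψ (Set.notMem_empty _))
end Aux9
/-- **Generalization over witness variables**: if `⊢_{CS(V)} φ(a)` for a formula
containing the witness variable `a`, then for some fresh basic variable `y`,
`⊢_{CS(V)} ∀y φ(y)`. -/
theorem generalization_over_witness (CS : Set FmlB) (hCS : IsCS Logic.folpb CS)
    (hvc : VariantClosed CS) (φ : FmlW) (a : Nat)
    (ha : Sum.inr a ∈ φ.allVars)
    (h : Deriv Logic.folpb (CSV CS) ∅ φ) :
    ∃ y : Nat, Sum.inl y ∉ φ.allVars ∧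
      Deriv Logic.folpb (CSV CS) ∅
        (Fml.all y (Fml.replaceAll (Sum.inr a) (Sum.inl y) φ)) := by
  obtain ⟨S, hcov, hS⟩ := deriv_replaceAll CS hvc a h
  obtain ⟨y, hy⟩ := Infinite.exists_notMem_finset S
  exact ⟨y, fun hmem => hy (hcov y hmem),
    Deriv.genR (hS y hy) (fun ψ hψ => absurd hψ (Set.notMem_empty _))⟩
end

section
/- Vacuous quantification for disjunctive templates: Let F(p⃗) be a disjunctive template and φ⃗ a sequence of Henkin formulas none of which contain free occurrences of the basic variable y. For each ψ ∈ ⟦F(φ⃗)⟧ there is some θ ∈ ⟦F(φ⃗)⟧ such that ⊢_{CS(V)} ∃y ψ → θ. -/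
section Aux
variable {V : Type} [DecidableEq V] {L : Logic} {CS Γ : Set (Fml V)}

/-- Composition of implications. -/
lemma Deriv.comp {A B C : Fml V} (h1 : Deriv L CS Γ (A.imp B))
    (h2 : Deriv L CS Γ (B.imp C)) : Deriv L CS Γ (A.imp C) := by
  have k : Deriv L CS Γ (A.imp (B.imp C)) :=
    .mp (.ax (IsAxiom.a1k L (B.imp C) A)) h2
  exact .mp (.mp (.ax (IsAxiom.a1s L A B C)) k) h1

/-- Modus ponens under an implication. -/
lemma Deriv.mp2 {A B C : Fml V} (h1 : Deriv L CS Γ (A.imp (B.imp C)))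
    (h2 : Deriv L CS Γ (A.imp B)) : Deriv L CS Γ (A.imp C) :=
  .mp (.mp (.ax (IsAxiom.a1s L A B C)) h1) h2

/-- Contraposition. -/
lemma Deriv.contra {A B : Fml V} (h : Deriv L CS Γ (A.imp B)) :
    Deriv L CS Γ (B.neg.imp A.neg) := by
  have s1 : Deriv L CS Γ (B.neg.imp (A.imp B.neg)) :=
    .ax (IsAxiom.a1k L B.neg A)
  have s2 : Deriv L CS Γ ((A.imp B.neg).imp ((A.imp B).imp A.neg)) :=
    .ax (IsAxiom.a1s L A B Fml.bot)
  have s3 : Deriv L CS Γ (B.neg.imp ((A.imp B).imp A.neg)) := s1.comp s2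
  exact s3.mp2 (.mp (.ax (IsAxiom.a1k L (A.imp B) B.neg)) h)

end Aux

/-- `y` is not free in any instance of a disjunctive template. -/
lemma inst_fv_not (v : Nat → FmlW) (y : Nat) :
    ∀ {F : Tmpl} {ψ : FmlW}, Inst v F ψ → F.Disjunctive →
      (∀ i ∈ F.letters, Sum.inl y ∉ (v i).fv) → Sum.inl y ∉ ψ.fv := by
  intro F ψ h
  induction h with
  | pvar i => intro _ hv; exact hv i (by simp [Tmpl.letters])
  | neg _ _ => intro hd; exact absurd hd (by simp [Tmpl.Disjunctive])
  | orr h1 h2 ih1 ih2 =>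
    intro hd hv
    have := ih1 hd.1 fun i hi => hv i (by simp [Tmpl.letters]; exact Or.inl hi)
    have := ih2 hd.2 fun i hi => hv i (by simp [Tmpl.letters]; exact Or.inr hi)
    simp_all [Fml.orr, Fml.neg, Fml.fv]
  | andd _ _ _ _ => intro hd; exact absurd hd (by simp [Tmpl.Disjunctive])
  | box t _ _ =>
    intro _ _
    simp [Fml.fv, Fml.wvars, Finset.mem_filter]

/-- **Vacuous quantification** for disjunctive templates: if no instantiating formula
contains `y` free, then for each `ψ ∈ ⟦F(φ⃗)⟧` there is `θ ∈ ⟦F(φ⃗)⟧` with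
`⊢_{CS(V)} ∃y ψ → θ`. -/
theorem vacuous_quantification (CS : Set FmlB) (hCS : IsCS Logic.folpb CS)
    (hvc : VariantClosed CS) (hApp : AxAppropriate Logic.folpb CS)
    (F : Tmpl) (hT : F.IsTemplate) (hd : F.Disjunctive)
    (v : Nat → FmlW) (y : Nat)
    (hv : ∀ i ∈ F.letters, Sum.inl y ∉ (v i).fv)
    (ψ : FmlW) (h : Inst v F ψ) :
    ∃ θ : FmlW, Inst v F θ ∧
      Deriv Logic.folpb (CSV CS) ∅ ((Fml.ex y ψ).imp θ) := by
  refine ⟨ψ, h, ?_⟩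
  have hfv : Sum.inl y ∉ ψ.fv := inst_fv_not v y h hd hv
  have hfvn : Sum.inl y ∉ ψ.neg.fv := by simp [Fml.neg, Fml.fv, hfv]
  have hvac : Deriv Logic.folpb (CSV CS) ∅ (ψ.neg.imp (Fml.all y ψ.neg)) :=
    .ax (IsAxiom.a1vac _ y ψ.neg hfvn)
  have hc : Deriv Logic.folpb (CSV CS) ∅ ((Fml.all y ψ.neg).neg.imp ψ.neg.neg) :=
    hvac.contra
  exact hc.comp (.ax (IsAxiom.a1dne _ ψ))
end

section
/- Up consistency: Let F(p⃗) = □G(p⃗) be a template, Γ a CS(V)-maximally consistent subset of Fml_J(V), and φ⃗ a sequence of Henkin formulas. If Γ^# ∪ ⟦¬G(φ⃗)⟧ is CS(V)-consistent, then Γ ∪ ⟦¬F(φ⃗)⟧ is CS(V)-consistent. -/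
section Aux

variable {V : Type} [DecidableEq V] {L : Logic} {CS : Set (Fml V)}

lemma jderiv_id {Γ : Set (Fml V)} (φ : Fml V) : Deriv L CS Γ (φ.imp φ) :=
  .mp (.mp (.ax (.a1s L φ (φ.imp φ) φ)) (.ax (.a1k L φ (φ.imp φ)))) (.ax (.a1k L φ φ))

lemma jderiv_comp {Γ : Set (Fml V)} {a b c : Fml V}
    (h1 : Deriv L CS Γ (b.imp c)) (h2 : Deriv L CS Γ (a.imp b)) :
    Deriv L CS Γ (a.imp c) :=
  .mp (.mp (.ax (.a1s L a b c)) (.mp (.ax (.a1k L (b.imp c) a)) h1)) h2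

theorem deduction {Γ : Set (Fml V)} {φ ψ : Fml V}
    (h : Deriv L CS (Γ ∪ {φ}) ψ) : Deriv L CS Γ (φ.imp ψ) := by
  induction h with
  | ax hax => exact .mp (.ax (.a1k L _ _)) (.ax hax)
  | cs hcs => exact .mp (.ax (.a1k L _ _)) (.cs hcs)
  | hyp hmem =>
    rcases hmem with hmem | hmem
    · exact .mp (.ax (.a1k L _ _)) (.hyp hmem)
    · rw [Set.mem_singleton_iff] at hmem
      subst hmem
      exact jderiv_id _
  | mp _ _ ih1 ih2 => exact .mp (.mp (.ax (.a1s L _ _ _)) ih1) ih2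
  | @genR χ x _ hcond ih =>
    have h1 : Deriv L CS Γ (Fml.all x (φ.imp χ)) :=
      .genR ih (fun ψ hψ => hcond ψ (Or.inl hψ))
    have h3 : Deriv L CS Γ ((Fml.all x φ).imp (Fml.all x χ)) :=
      .mp (.ax (.a1allImp L x φ χ)) h1
    have h4 : Deriv L CS Γ (φ.imp (Fml.all x φ)) :=
      .ax (.a1vac L x φ (hcond φ (Or.inr rfl)))
    exact jderiv_comp h3 h4

lemma mem_of_deriv {Γ : Set (Fml V)} (hmax : MaxConsistent L CS Γ) {φ : Fml V}
    (h : Deriv L CS Γ φ) : φ ∈ Γ := by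
  have hcons : Consistent L CS (Γ ∪ {φ}) := fun hbot =>
    hmax.1 (.mp (deduction hbot) h)
  have := hmax.2 (Γ ∪ {φ}) Set.subset_union_left hcons
  rw [← this]
  exact Or.inr rfl

lemma deriv_neg_of_not_mem {Γ : Set (Fml V)} (hmax : MaxConsistent L CS Γ)
    {φ : Fml V} (h : φ ∉ Γ) : Deriv L CS Γ φ.neg := by
  have hnc : ¬ Consistent L CS (Γ ∪ {φ}) := by
    intro hc
    have := hmax.2 (Γ ∪ {φ}) Set.subset_union_left hc
    exact h (by rw [← this]; exact Or.inr rfl)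
  exact deduction (not_not.mp hnc)

lemma wvars_isRight {φ : Fml V} : ∀ v ∈ φ.wvars, (v : Nat ⊕ V).isRight := by
  intro v hv
  exact (Finset.mem_filter.mp hv).2

lemma fbv_box_wvars (t : JTerm) (φ : Fml V) :
    (Fml.box t φ.wvars φ).fbv = ∅ := by
  rw [Finset.eq_empty_iff_forall_notMem]
  intro n hn
  rw [Fml.fbv, Finset.mem_biUnion] at hn
  obtain ⟨w, hw, hn⟩ := hn
  have hw' : w ∈ φ.wvars := hw
  have := wvars_isRight w hw'
  cases w with
  | inl m => simp at this
  | inr m => simp at hn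

lemma wvars_box_wvars (t : JTerm) (φ : Fml V) :
    (Fml.box t φ.wvars φ).wvars = φ.wvars := by
  ext w
  simp only [Fml.wvars, Fml.allVars, Finset.mem_filter, Finset.mem_union,
    Finset.mem_image]
  constructor
  · rintro ⟨(h | ⟨n, _, rfl⟩) | h, hr⟩
    · exact h
    · simp at hr
    · exact ⟨h, hr⟩
  · intro h
    exact ⟨Or.inl (Or.inl h), h.2⟩

lemma close_box_wvars (t : JTerm) (φ : Fml V) :
    (Fml.box t φ.wvars φ).close = Fml.box t φ.wvars φ := by
  rw [Fml.close, fbv_box_wvars, Finset.toList_empty]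
  rfl

end Aux

/-- **Up consistency**: for `F = □G` and `Γ` a `CS(V)`-maximally consistent set, if
`Γ^# ∪ ⟦¬G(φ⃗)⟧` is `CS(V)`-consistent then so is `Γ ∪ ⟦¬F(φ⃗)⟧`. -/
theorem up_consistency (CS : Set FmlB) (hCS : IsCS Logic.folpb CS)
    (hvc : VariantClosed CS) (hApp : AxAppropriate Logic.folpb CS)
    (G : Tmpl) (hT : (Tmpl.box G).IsTemplate)
    (Γ : Set FmlW) (hmax : MaxConsistent Logic.folpb (CSV CS) Γ)
    (v : Nat → FmlW)
    (h : Consistent Logic.folpb (CSV CS) (sharp Γ ∪ NegInst v G)) :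
    Consistent Logic.folpb (CSV CS) (Γ ∪ NegInst v (Tmpl.box G)) := by
  intro hbot
  by_cases hsub : NegInst v (Tmpl.box G) ⊆ Γ
  · exact hmax.1 (by rwa [Set.union_eq_self_of_subset_right hsub] at hbot)
  · obtain ⟨χ, hχmem, hχnot⟩ := Set.not_subset.mp hsub
    obtain ⟨ψB, hInstB, rfl⟩ := hχmem
    cases hInstB with
    | @box _ ψ t hG =>
      set B : FmlW := Fml.box t ψ.wvars ψ with hBdef
      have h1 : Deriv Logic.folpb (CSV CS) Γ B.neg.neg :=
        deriv_neg_of_not_mem hmax hχnot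
      have h2 : Deriv Logic.folpb (CSV CS) Γ B :=
        .mp (.ax (.a1dne _ B)) h1
      have h3 : Deriv Logic.folpb (CSV CS) Γ
          (Fml.box t.bang ψ.wvars B) :=
        .mp (.ax (.b4 _ t ψ.wvars ψ)) h2
      have hB2 : Fml.box t.bang ψ.wvars B ∈ Γ := mem_of_deriv hmax h3
      have hBsharp : B ∈ sharp Γ := by
        refine ⟨t.bang, ψ.wvars, B, hB2, ?_, ?_, ?_⟩
        · rw [Finset.eq_empty_iff_forall_notMem]
          intro n hn
          rw [Fml.fbv, Finset.mem_biUnion] at hn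
          obtain ⟨w, hw, hn⟩ := hn
          have hw' : w ∈ ψ.wvars := hw
          have := wvars_isRight w hw'
          cases w with
          | inl m => simp at this
          | inr m => simp at hn
        · exact (wvars_box_wvars t ψ).symm
        · exact (close_box_wvars t ψ).symm
      have d1 : Deriv Logic.folpb (CSV CS) (sharp Γ ∪ NegInst v G) B :=
        .hyp (Or.inl hBsharp)
      have d2 : Deriv Logic.folpb (CSV CS) (sharp Γ ∪ NegInst v G) ψ :=
        .mp (.ax (.b1 _ t ψ.wvars ψ)) d1
      have d3 : Deriv Logic.folpb (CSV CS) (sharp Γ ∪ NegInst v G) ψ.neg :=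
        .hyp (Or.inr ⟨ψ, hG, rfl⟩)
      exact h (.mp d3 d2)
end
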